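/- Let X be uniform Bernoulli(1/2), Y its erasure with erasure probability p ∈ (0,1), and (W₁,W₂) random variables with (W₁,W₂)−X−Y a Markov chain. Suppose there exist functions f₁, f₂ with X̂₁ = f₁(W₁), X̂₂ = f₂(W₁,W₂,Y), P(X≠X̂₁) ≤ D₁ ≤ 1/2, and P(X≠X̂₂) ≤ D₂ ≤ p/2. Then I(X;W₁) + I(X;W₂|Y,W₁) ≥ p(1 − h(D₂/p)) + (1−p)(1 − h(D₁)). -/

import Mathlib

open Finset Real
open scoped Classical

noncomputable section

/-- Probability of an event under a finite probability mass function. -/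
def pr {Ω : Type} [Fintype Ω] (P : Ω → ℝ) (A : Ω → Prop) : ℝ :=
  ∑ ω, if A ω then P ω else 0

/-- `P` is a probability mass function on the finite type `Ω`. -/
def IsPMF {Ω : Type} [Fintype Ω] (P : Ω → ℝ) : Prop :=
  (∀ ω, 0 ≤ P ω) ∧ ∑ ω, P ω = 1

/-- `-t log₂ t` (with the convention `0 log 0 = 0`). -/
def nlog (t : ℝ) : ℝ := - (t * Real.logb 2 t)

/-- Shannon entropy (base 2) of a random variable `X` on `(Ω, P)`. -/
def ent {Ω α : Type} [Fintype Ω] [Fintype α] (P : Ω → ℝ) (X : Ω → α) : ℝ :=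
  ∑ x, nlog (pr P (fun ω => X ω = x))

/-- Conditional Shannon entropy `H(X|Y) = H(X,Y) - H(Y)`. -/
def condEnt {Ω α β : Type} [Fintype Ω] [Fintype α] [Fintype β]
    (P : Ω → ℝ) (X : Ω → α) (Y : Ω → β) : ℝ :=
  ent P (fun ω => (X ω, Y ω)) - ent P Y

/-- Mutual information `I(X;Y) = H(X) - H(X|Y)`. -/
def mi {Ω α β : Type} [Fintype Ω] [Fintype α] [Fintype β]
    (P : Ω → ℝ) (X : Ω → α) (Y : Ω → β) : ℝ :=
  ent P X - condEnt P X Y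

/-- Conditional mutual information `I(X;Y|Z) = H(X|Z) - H(X|Y,Z)`. -/
def condMI {Ω α β γ : Type} [Fintype Ω] [Fintype α] [Fintype β] [Fintype γ]
    (P : Ω → ℝ) (X : Ω → α) (Y : Ω → β) (Z : Ω → γ) : ℝ :=
  condEnt P X Z - condEnt P X (fun ω => (Y ω, Z ω))

/-- Binary entropy function. -/
def binEnt (a : ℝ) : ℝ := nlog a + nlog (1 - a)

section Basic
variable {Ω : Type} [Fintype Ω] {P : Ω → ℝ}

lemma pr_congr {A B : Ω → Prop} (h : ∀ ω, A ω ↔ B ω) : pr P A = pr P B := by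
  unfold pr; apply Finset.sum_congr rfl; intro ω _; simp [h ω]

lemma pr_nonneg (hP : IsPMF P) (A : Ω → Prop) : 0 ≤ pr P A := by
  unfold pr; apply Finset.sum_nonneg; intro ω _
  split <;> simp [hP.1 ω]

lemma pr_mono (hP : IsPMF P) {A B : Ω → Prop} (h : ∀ ω, A ω → B ω) : pr P A ≤ pr P B := by
  unfold pr; apply Finset.sum_le_sum; intro ω _
  by_cases hA : A ω
  · simp [hA, h ω hA]
  · simp only [hA, if_false]; split <;> simp [hP.1 ω]

lemma pr_empty (h : ∀ ω, ¬ A ω) : pr P A = 0 := by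
  unfold pr; apply Finset.sum_eq_zero; intro ω _; simp [h ω]

lemma pr_split {α : Type} [Fintype α] (A : Ω → Prop) (T : Ω → α) :
    pr P A = ∑ a, pr P (fun ω => A ω ∧ T ω = a) := by
  unfold pr
  rw [Finset.sum_comm]
  apply Finset.sum_congr rfl; intro ω _
  by_cases hA : A ω
  · simp [hA, Finset.sum_ite_eq]
  · simp [hA]

lemma pr_total {α : Type} [Fintype α] (hP : IsPMF P) (T : Ω → α) :
    ∑ a, pr P (fun ω => T ω = a) = 1 := by
  have := pr_split (P := P) (fun _ => True) T
  simp only [true_and] at this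
  rw [← this]
  unfold pr; simp [hP.2]

lemma pr_comp {α : Type} [Fintype α] (T : Ω → α) (A : α → Prop) :
    pr P (fun ω => A (T ω)) = ∑ a, if A a then pr P (fun ω => T ω = a) else 0 := by
  have key : ∀ a, (if A a then pr P (fun ω => T ω = a) else 0)
      = ∑ ω, if A a ∧ T ω = a then P ω else 0 := by
    intro a; by_cases hA : A a <;> simp [pr, hA]
  rw [Finset.sum_congr rfl (fun a _ => key a), Finset.sum_comm]
  unfold pr
  apply Finset.sum_congr rfl; intro ω _
  symm
  by_cases hA : A (T ω)
  · simp only [hA, if_true]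
    calc ∑ a, (if A a ∧ T ω = a then P ω else 0)
        = ∑ a, (if T ω = a then P ω else 0) := by
          apply Finset.sum_congr rfl; intro a _
          by_cases h1 : T ω = a
          · subst h1; simp [hA]
          · simp [h1]
      _ = P ω := by simp [Finset.sum_ite_eq]
  · simp only [hA, if_false]
    apply Finset.sum_eq_zero
    intro a _
    by_cases h1 : T ω = a
    · subst h1; simp [hA]
    · simp [h1]

end Basic

section Nlog

lemma nlog_zero : nlog 0 = 0 := by simp [nlog]
lemma nlog_one : nlog 1 = 0 := by simp [nlog]

lemma nlog_mul {a b : ℝ} (ha : 0 ≤ a) (hb : 0 ≤ b) :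
    nlog (a * b) = a * nlog b + b * nlog a := by
  rcases eq_or_lt_of_le ha with h|h
  · simp [← h, nlog]
  rcases eq_or_lt_of_le hb with h'|h'
  · simp [← h', nlog]
  unfold nlog
  rw [Real.logb, Real.log_mul (ne_of_gt h) (ne_of_gt h'), Real.logb, Real.logb]
  ring

lemma nlog_eq_negMulLog (t : ℝ) : nlog t = Real.negMulLog t / Real.log 2 := by
  unfold nlog Real.negMulLog Real.logb
  ring

end Nlog

section BinEnt

lemma binEnt_symm (a : ℝ) : binEnt (1 - a) = binEnt a := by
  unfold binEnt; ring_nf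

lemma binEnt_concave : ConcaveOn ℝ (Set.Icc (0:ℝ) 1) binEnt := by
  have h1 : ConcaveOn ℝ (Set.Icc (0:ℝ) 1) (fun a => Real.negMulLog a) :=
    (Real.strictConcaveOn_negMulLog.concaveOn).subset
      (fun x hx => hx.1) (convex_Icc 0 1)
  have h2 : ConcaveOn ℝ (Set.Icc (0:ℝ) 1) (fun a => Real.negMulLog (1 - a)) := by
    refine ⟨convex_Icc 0 1, fun x hx y hy a b ha hb hab => ?_⟩
    have hx' : (1:ℝ) - x ∈ Set.Icc (0:ℝ) 1 := ⟨by linarith [hx.2], by linarith [hx.1]⟩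
    have hy' : (1:ℝ) - y ∈ Set.Icc (0:ℝ) 1 := ⟨by linarith [hy.2], by linarith [hy.1]⟩
    have key := h1.2 hx' hy' ha hb hab
    have heq : a • ((1:ℝ) - x) + b • (1 - y) = 1 - (a • x + b • y) := by
      simp only [smul_eq_mul]; linear_combination hab
    rw [heq] at key
    exact key
  have hsum := h1.add h2
  have hc : (0:ℝ) ≤ (Real.log 2)⁻¹ := by positivity
  have hfin := hsum.smul hc
  have : binEnt = fun a =>
      (Real.log 2)⁻¹ • ((fun a => Real.negMulLog a) a + (fun a => Real.negMulLog (1 - a)) a) := by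
    funext a
    simp only [binEnt, nlog_eq_negMulLog, smul_eq_mul]
    ring
  rw [this]
  exact hfin

lemma binEnt_mono {a b : ℝ} (ha : 0 ≤ a) (hab : a ≤ b) (hb : b ≤ 1/2) :
    binEnt a ≤ binEnt b := by
  rcases eq_or_lt_of_le (hab.trans hb) with h|h
  · -- a = 1/2, so a = b = 1/2
    have : a = b := le_antisymm hab (by linarith)
    rw [this]
  · -- a < 1/2
    have h2a : 0 < 1 - 2*a := by linarith
    set μ : ℝ := (1 - a - b) / (1 - 2*a) with hμ
    set ν : ℝ := (b - a) / (1 - 2*a) with hν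
    have hμ0 : 0 ≤ μ := by apply div_nonneg <;> linarith
    have hν0 : 0 ≤ ν := by apply div_nonneg <;> linarith
    have hμν : μ + ν = 1 := by
      rw [hμ, hν, ← add_div]
      rw [div_eq_one_iff_eq (by linarith : (1:ℝ) - 2*a ≠ 0)]
      ring
    have hmem1 : a ∈ Set.Icc (0:ℝ) 1 := ⟨ha, by linarith⟩
    have hmem2 : (1 - a) ∈ Set.Icc (0:ℝ) 1 := ⟨by linarith, by linarith⟩
    have := binEnt_concave.2 hmem1 hmem2 hμ0 hν0 hμν
    have hcomb : μ • a + ν • (1 - a) = b := by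
      simp only [smul_eq_mul, hμ, hν]
      rw [div_mul_eq_mul_div, div_mul_eq_mul_div, ← add_div, div_eq_iff h2a.ne']
      ring
    rw [hcomb] at this
    calc binEnt a = μ • binEnt a + ν • binEnt (1 - a) := by
          rw [binEnt_symm, ← add_smul, hμν, one_smul]
      _ ≤ binEnt b := this

lemma binEnt_jensen {ι : Type} [Fintype ι] (w t : ι → ℝ)
    (hw : ∀ i, 0 ≤ w i) (hw1 : ∑ i, w i = 1)
    (ht : ∀ i, t i ∈ Set.Icc (0:ℝ) 1) :
    ∑ i, w i * binEnt (t i) ≤ binEnt (∑ i, w i * t i) := by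
  have := binEnt_concave.le_map_sum (t := Finset.univ) (w := w) (p := t)
    (fun i _ => hw i) hw1 (fun i _ => ht i)
  simpa [smul_eq_mul] using this

end BinEnt

section Relabel
variable {Ω : Type} [Fintype Ω] {P : Ω → ℝ}

lemma ent_comp_inj {α β : Type} [Fintype α] [Fintype β] (T : Ω → α) (g : α → β)
    (hg : Function.Injective g) : ent P (fun ω => g (T ω)) = ent P T := by
  unfold ent
  calc ∑ b : β, nlog (pr P fun ω => g (T ω) = b)
      = ∑ b ∈ univ.image g, nlog (pr P fun ω => g (T ω) = b) := by
        symm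
        apply Finset.sum_subset (Finset.subset_univ (univ.image g))
        intro b _ hb
        rw [Finset.mem_image] at hb
        push_neg at hb
        rw [pr_empty (fun ω h => hb (T ω) (Finset.mem_univ _) h), nlog_zero]
    _ = ∑ a : α, nlog (pr P fun ω => g (T ω) = g a) :=
        Finset.sum_image (fun a _ a' _ h => hg h)
    _ = ∑ a : α, nlog (pr P fun ω => T ω = a) := by
        apply Finset.sum_congr rfl
        intro a _
        congr 1
        exact pr_congr fun ω => ⟨fun h => hg h, fun h => by rw [h]⟩

lemma condEnt_comp_inj {α β β' : Type} [Fintype α] [Fintype β] [Fintype β']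
    (X : Ω → α) (T : Ω → β) (g : β → β') (hg : Function.Injective g) :
    (ent P (fun ω => (X ω, g (T ω))) - ent P (fun ω => g (T ω)))
      = ent P (fun ω => (X ω, T ω)) - ent P T := by
  rw [ent_comp_inj T g hg]
  congr 1
  exact ent_comp_inj (fun ω => (X ω, T ω)) (Prod.map id g)
    (Function.Injective.prodMap (fun _ _ h => h) hg)

lemma ent_bool_uniform (X : Ω → Bool) (hX : ∀ b, pr P (fun ω => X ω = b) = 1/2) :
    ent P X = 1 := by
  unfold ent
  have h : Real.logb 2 (1/2 : ℝ) = -1 := by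
    rw [show (1:ℝ)/2 = 2⁻¹ by norm_num, Real.logb_inv, Real.logb_self_eq_one] <;> norm_num
  simp [hX, nlog, h]

end Relabel

section Fano
variable {Ω : Type} [Fintype Ω] {P : Ω → ℝ}

lemma smul_nlog_div (s t : ℝ) (hs : 0 < s) (ht : 0 ≤ t) :
    s * nlog (t / s) = nlog t + t * Real.logb 2 s := by
  rcases eq_or_lt_of_le ht with h|h
  · simp [← h, nlog]
  · unfold nlog
    rw [Real.logb_div (ne_of_gt h) (ne_of_gt hs)]
    field_simp
    ring

lemma nlog_split (a b : ℝ) (ha : 0 ≤ a) (hb : 0 ≤ b) (hab : 0 < a + b) :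
    nlog a + nlog b - nlog (a + b) = (a + b) * binEnt (a / (a + b)) := by
  have h1 : 1 - a / (a + b) = b / (a + b) := by field_simp; ring
  unfold binEnt
  rw [h1, mul_add, smul_nlog_div _ _ hab ha, smul_nlog_div _ _ hab hb]
  unfold nlog
  ring

lemma fano (hP : IsPMF P) {α : Type} [Fintype α] (X : Ω → Bool) (W : Ω → α)
    (f : α → Bool) (D : ℝ) (hD : pr P (fun ω => X ω ≠ f (W ω)) ≤ D) (hD2 : D ≤ 1/2) :
    condEnt P X W ≤ binEnt D := by
  set q : Bool → α → ℝ := fun x w => pr P (fun ω => X ω = x ∧ W ω = w) with hq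
  set s : α → ℝ := fun w => pr P (fun ω => W ω = w) with hsdef
  have hq0 : ∀ x w, 0 ≤ q x w := fun x w => pr_nonneg hP _
  have hs_eq : ∀ w, s w = q true w + q false w := by
    intro w
    have hsp := pr_split (P := P) (fun ω => W ω = w) X
    rw [Fintype.sum_bool] at hsp
    rw [hsdef]
    simp only
    rw [hsp, hq]
    simp only
    congr 1 <;> exact pr_congr (fun ω => and_comm)
  have hs0 : ∀ w, 0 ≤ s w := fun w => pr_nonneg hP _
  have hqs : ∀ x w, q x w ≤ s w := by
    intro x w
    rw [hs_eq w]
    cases x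
    · nlinarith [hq0 true w]
    · nlinarith [hq0 false w]
  have hq_zero : ∀ x w, s w = 0 → q x w = 0 := fun x w h =>
    le_antisymm (h ▸ hqs x w) (hq0 x w)
  -- entropy of the pair
  have hXW : ent P (fun ω => (X ω, W ω)) = ∑ w, (nlog (q true w) + nlog (q false w)) := by
    unfold ent
    rw [Fintype.sum_prod_type, Fintype.sum_bool, ← Finset.sum_add_distrib]
    apply Finset.sum_congr rfl
    intro w _
    congr 1 <;> · congr 1; exact pr_congr (fun ω => by simp [Prod.ext_iff])
  -- the error mass at each w
  set e : α → ℝ := fun w => q (!(f w)) w with he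
  have he0 : ∀ w, 0 ≤ e w := fun w => hq0 _ w
  have hes : ∀ w, e w ≤ s w := fun w => hqs _ w
  have hD' : pr P (fun ω => X ω ≠ f (W ω)) = ∑ w, e w := by
    rw [pr_comp (P := P) (fun ω => (X ω, W ω)) (fun p => p.1 ≠ f p.2)]
    rw [Fintype.sum_prod_type, Fintype.sum_bool, ← Finset.sum_add_distrib]
    apply Finset.sum_congr rfl
    intro w _
    have h1 : ∀ x : Bool, pr P (fun ω => (X ω, W ω) = (x, w)) = q x w := by
      intro x; exact pr_congr (fun ω => by simp [Prod.ext_iff])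
    cases hfw : f w <;> simp [hfw, h1, he] <;> rfl
  -- pointwise identity
  have hpoint : ∀ w, nlog (q true w) + nlog (q false w) - nlog (s w)
      = s w * binEnt (e w / s w) := by
    intro w
    rcases eq_or_lt_of_le (hs0 w) with h|h
    · rw [← h, hq_zero true w h.symm, hq_zero false w h.symm, nlog_zero]
      ring
    · have key := nlog_split (q true w) (q false w) (hq0 true w) (hq0 false w)
        (by rw [← hs_eq w]; exact h)
      rw [← hs_eq w] at key
      rw [key]
      have harg : binEnt (e w / s w) = binEnt (q true w / s w) := by
        rw [he]
        simp only
        cases hfw : f w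
        · norm_num
        · have hsum : q true w / s w + q false w / s w = 1 := by
            rw [← add_div, ← hs_eq w, div_self (ne_of_gt h)]
          have hqq : q (!true) w / s w = 1 - q true w / s w := by
            show q false w / s w = 1 - q true w / s w
            linarith
          rw [hqq, binEnt_symm]
      rw [harg]
  have hcond : condEnt P X W = ∑ w, s w * binEnt (e w / s w) := by
    have hW : ent P W = ∑ w, nlog (s w) := rfl
    unfold condEnt
    rw [hXW, hW, ← Finset.sum_sub_distrib]
    exact Finset.sum_congr rfl fun w _ => hpoint w
  rw [hcond]
  have hsum1 : ∑ w, s w = 1 := pr_total hP W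
  have ht : ∀ w, e w / s w ∈ Set.Icc (0:ℝ) 1 := by
    intro w
    rcases eq_or_lt_of_le (hs0 w) with h|h
    · have hez : e w = 0 := le_antisymm (h ▸ hes w) (he0 w)
      rw [hez]
      simp
    · exact ⟨div_nonneg (he0 w) (hs0 w), (div_le_one h).mpr (hes w)⟩
  have hjen := binEnt_jensen s (fun w => e w / s w) hs0 hsum1 ht
  refine le_trans hjen ?_
  have hsum2 : ∑ w, s w * (e w / s w) = ∑ w, e w := by
    apply Finset.sum_congr rfl
    intro w _
    rcases eq_or_lt_of_le (hs0 w) with h|h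
    · have hez : e w = 0 := le_antisymm (h ▸ hes w) (he0 w)
      rw [hez]
      simp
    · field_simp
  rw [hsum2]
  apply binEnt_mono
  · rw [← hD']; exact pr_nonneg hP _
  · rw [← hD']; exact hD
  · exact hD2

end Fano

section Erasure
variable {Ω : Type} [Fintype Ω] {P : Ω → ℝ}

lemma bool_sum (x : Bool) (g : Bool → ℝ) : ∑ b, g b = g x + g (!x) := by
  cases x
  · rw [Fintype.sum_bool]; simp [add_comm]
  · rw [Fintype.sum_bool]; simp

lemma erasure_condEnt {α : Type} [Fintype α] (hP : IsPMF P) (X : Ω → Bool)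
    (Y : Ω → Option Bool)
    (hstruct : ∀ ω, Y ω = some (X ω) ∨ Y ω = none) (p : ℝ) (hp0 : 0 ≤ p) (hp1 : p ≤ 1)
    (W : Ω → α)
    (hW : ∀ x w, pr P (fun ω => X ω = x ∧ Y ω = none ∧ W ω = w)
      = p * pr P (fun ω => X ω = x ∧ W ω = w)) :
    condEnt P X (fun ω => (Y ω, W ω)) = p * condEnt P X W := by
  set q : Bool → α → ℝ := fun x w => pr P (fun ω => X ω = x ∧ W ω = w) with hq
  have hq0 : ∀ x w, 0 ≤ q x w := fun x w => pr_nonneg hP _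
  have hp1' : (0:ℝ) ≤ 1 - p := by linarith
  -- impossible values
  have hA : ∀ (x b : Bool) (w : α), b ≠ x →
      pr P (fun ω => X ω = x ∧ Y ω = some b ∧ W ω = w) = 0 := by
    intro x b w hbx
    apply pr_empty
    rintro ω ⟨hx, hy, -⟩
    rcases hstruct ω with h|h
    · rw [hx] at h
      rw [h] at hy
      exact hbx (Option.some.inj hy).symm
    · rw [h] at hy
      cases hy
  -- non-erased values
  have hB : ∀ (x : Bool) (w : α),
      pr P (fun ω => X ω = x ∧ Y ω = some x ∧ W ω = w) = (1 - p) * q x w := by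
    intro x w
    have hsp := pr_split (P := P) (fun ω => X ω = x ∧ W ω = w) Y
    rw [Fintype.sum_option, bool_sum x] at hsp
    have h1 : pr P (fun ω => (X ω = x ∧ W ω = w) ∧ Y ω = none) = p * q x w := by
      rw [pr_congr (B := fun ω => X ω = x ∧ Y ω = none ∧ W ω = w) (fun ω => by tauto)]
      exact hW x w
    have h3 : pr P (fun ω => (X ω = x ∧ W ω = w) ∧ Y ω = some (!x)) = 0 := by
      rw [pr_congr (B := fun ω => X ω = x ∧ Y ω = some (!x) ∧ W ω = w) (fun ω => by tauto)]
      exact hA x (!x) w (Bool.not_ne_self x)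
    have h4 : pr P (fun ω => (X ω = x ∧ W ω = w) ∧ Y ω = some x)
        = pr P (fun ω => X ω = x ∧ Y ω = some x ∧ W ω = w) :=
      pr_congr (fun ω => by tauto)
    rw [h1, h3, h4] at hsp
    have hqxw : q x w = pr P fun ω => X ω = x ∧ W ω = w := by rw [hq]
    rw [← hqxw] at hsp
    linarith
  -- marginals of (Y,W)
  have hyw_none : ∀ w, pr P (fun ω => Y ω = none ∧ W ω = w)
      = p * (q true w + q false w) := by
    intro w
    have hsp := pr_split (P := P) (fun ω => Y ω = none ∧ W ω = w) X
    rw [Fintype.sum_bool] at hsp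
    rw [hsp]
    have h1 : ∀ x : Bool, pr P (fun ω => (Y ω = none ∧ W ω = w) ∧ X ω = x) = p * q x w := by
      intro x
      rw [pr_congr (B := fun ω => X ω = x ∧ Y ω = none ∧ W ω = w) (fun ω => by tauto)]
      exact hW x w
    rw [h1 true, h1 false]
    ring
  have hyw_some : ∀ (b : Bool) (w : α), pr P (fun ω => Y ω = some b ∧ W ω = w)
      = (1 - p) * q b w := by
    intro b w
    have hsp := pr_split (P := P) (fun ω => Y ω = some b ∧ W ω = w) X
    rw [bool_sum b] at hsp
    have h1 : pr P (fun ω => (Y ω = some b ∧ W ω = w) ∧ X ω = b)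
        = (1 - p) * q b w := by
      rw [pr_congr (B := fun ω => X ω = b ∧ Y ω = some b ∧ W ω = w) (fun ω => by tauto)]
      exact hB b w
    have h2 : pr P (fun ω => (Y ω = some b ∧ W ω = w) ∧ X ω = !b) = 0 := by
      rw [pr_congr (B := fun ω => X ω = !b ∧ Y ω = some b ∧ W ω = w) (fun ω => by tauto)]
      exact hA (!b) b w (Ne.symm (Bool.not_ne_self b))
    rw [h1, h2] at hsp
    rw [hsp]
    ring
  -- abbreviations
  set A : ℝ := ∑ x : Bool, ∑ w : α, nlog (q x w) with hA_def
  set B : ℝ := ∑ w : α, nlog (q true w + q false w) with hB_def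
  -- total masses
  have hSsum : ∑ x : Bool, ∑ w : α, q x w = 1 := by
    have := pr_total hP (fun ω => (X ω, W ω))
    rw [Fintype.sum_prod_type] at this
    rw [← this]
    apply Finset.sum_congr rfl; intro x _
    apply Finset.sum_congr rfl; intro w _
    rw [hq]
    exact (pr_congr (fun ω => by simp [Prod.ext_iff])).symm
  have hssum : ∑ w : α, (q true w + q false w) = 1 := by
    rw [Finset.sum_add_distrib]
    rw [Fintype.sum_bool] at hSsum
    exact hSsum
  -- entropy of (X,(Y,W))
  have hentXYW : ent P (fun ω => (X ω, (Y ω, W ω)))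
      = (∑ x : Bool, ∑ w : α, nlog (p * q x w))
        + ∑ x : Bool, ∑ w : α, nlog ((1 - p) * q x w) := by
    unfold ent
    rw [Fintype.sum_prod_type, ← Finset.sum_add_distrib]
    apply Finset.sum_congr rfl; intro x _
    rw [Fintype.sum_prod_type, Fintype.sum_option, bool_sum x]
    have hval : ∀ (y : Option Bool) (w : α),
        pr P (fun ω => (X ω, (Y ω, W ω)) = (x, (y, w)))
          = pr P (fun ω => X ω = x ∧ Y ω = y ∧ W ω = w) :=
      fun y w => pr_congr (fun ω => by simp [Prod.ext_iff, and_assoc])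
    have t1 : ∑ w : α, nlog (pr P fun ω => (X ω, (Y ω, W ω)) = (x, (none, w)))
        = ∑ w : α, nlog (p * q x w) := by
      apply Finset.sum_congr rfl; intro w _
      rw [hval none w, hW x w]
    have t2 : ∑ w : α, nlog (pr P fun ω => (X ω, (Y ω, W ω)) = (x, (some x, w)))
        = ∑ w : α, nlog ((1 - p) * q x w) := by
      apply Finset.sum_congr rfl; intro w _
      rw [hval (some x) w, hB x w]
    have t3 : ∑ w : α, nlog (pr P fun ω => (X ω, (Y ω, W ω)) = (x, (some (!x), w))) = 0 := by
      apply Finset.sum_eq_zero; intro w _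
      rw [hval (some (!x)) w, hA x (!x) w (Bool.not_ne_self x), nlog_zero]
    rw [t1, t2, t3]
    ring
  -- entropy of (Y,W)
  have hentYW : ent P (fun ω => (Y ω, W ω))
      = (∑ w : α, nlog (p * (q true w + q false w)))
        + ∑ b : Bool, ∑ w : α, nlog ((1 - p) * q b w) := by
    unfold ent
    rw [Fintype.sum_prod_type, Fintype.sum_option]
    congr 1
    · apply Finset.sum_congr rfl; intro w _
      rw [pr_congr (B := fun ω => Y ω = none ∧ W ω = w) (fun ω => by simp [Prod.ext_iff]),
        hyw_none w]
    · apply Finset.sum_congr rfl; intro b _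
      apply Finset.sum_congr rfl; intro w _
      rw [pr_congr (B := fun ω => Y ω = some b ∧ W ω = w) (fun ω => by simp [Prod.ext_iff]),
        hyw_some b w]
  -- expand the products inside nlog
  have e1 : ∑ x : Bool, ∑ w : α, nlog (p * q x w) = p * A + nlog p := by
    calc ∑ x : Bool, ∑ w : α, nlog (p * q x w)
        = ∑ x : Bool, ∑ w : α, (p * nlog (q x w) + nlog p * q x w) := by
          apply Finset.sum_congr rfl; intro x _
          apply Finset.sum_congr rfl; intro w _
          rw [nlog_mul hp0 (hq0 x w)]; ring
      _ = p * (∑ x : Bool, ∑ w : α, nlog (q x w))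
            + nlog p * (∑ x : Bool, ∑ w : α, q x w) := by
          simp only [Finset.sum_add_distrib, Finset.mul_sum]
      _ = p * A + nlog p := by rw [hSsum, ← hA_def]; ring
  have e2 : ∑ x : Bool, ∑ w : α, nlog ((1 - p) * q x w) = (1 - p) * A + nlog (1 - p) := by
    calc ∑ x : Bool, ∑ w : α, nlog ((1 - p) * q x w)
        = ∑ x : Bool, ∑ w : α, ((1 - p) * nlog (q x w) + nlog (1 - p) * q x w) := by
          apply Finset.sum_congr rfl; intro x _
          apply Finset.sum_congr rfl; intro w _
          rw [nlog_mul hp1' (hq0 x w)]; ring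
      _ = (1 - p) * (∑ x : Bool, ∑ w : α, nlog (q x w))
            + nlog (1 - p) * (∑ x : Bool, ∑ w : α, q x w) := by
          simp only [Finset.sum_add_distrib, Finset.mul_sum]
      _ = (1 - p) * A + nlog (1 - p) := by rw [hSsum, ← hA_def]; ring
  have e3 : ∑ w : α, nlog (p * (q true w + q false w)) = p * B + nlog p := by
    calc ∑ w : α, nlog (p * (q true w + q false w))
        = ∑ w : α, (p * nlog (q true w + q false w) + nlog p * (q true w + q false w)) := by
          apply Finset.sum_congr rfl; intro w _
          rw [nlog_mul hp0 (by have := hq0 true w; have := hq0 false w; linarith)]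
          ring
      _ = p * (∑ w : α, nlog (q true w + q false w))
            + nlog p * (∑ w : α, (q true w + q false w)) := by
          rw [Finset.sum_add_distrib, ← Finset.mul_sum, ← Finset.mul_sum]
      _ = p * B + nlog p := by rw [hssum, ← hB_def]; ring
  -- the two conditional entropies
  have hXW : ent P (fun ω => (X ω, W ω)) = A := by
    unfold ent
    rw [Fintype.sum_prod_type, hA_def]
    apply Finset.sum_congr rfl; intro x _
    apply Finset.sum_congr rfl; intro w _
    congr 1
    rw [hq]
    exact pr_congr (fun ω => by simp [Prod.ext_iff])
  have hWm : ent P W = B := by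
    unfold ent
    rw [hB_def]
    apply Finset.sum_congr rfl; intro w _
    congr 1
    have hsp := pr_split (P := P) (fun ω => W ω = w) X
    rw [Fintype.sum_bool] at hsp
    rw [hsp, hq]
    congr 1 <;> · exact pr_congr (fun ω => by tauto)
  unfold condEnt
  rw [hentXYW, hentYW, e1, e2, e3, hXW, hWm]
  ring
end Erasure

section Main
variable {Ω : Type} [Fintype Ω] {P : Ω → ℝ}

lemma condEnt_congr_inj {α β β' : Type} [Fintype α] [Fintype β] [Fintype β']
    (X : Ω → α) (T : Ω → β) (T' : Ω → β') (g : β → β')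
    (hg : Function.Injective g) (h : ∀ ω, T' ω = g (T ω)) :
    condEnt P X T' = condEnt P X T := by
  unfold condEnt
  have e1 : ent P T' = ent P T := by
    rw [show T' = fun ω => g (T ω) from funext h]
    exact ent_comp_inj T g hg
  have e2 : ent P (fun ω => (X ω, T' ω)) = ent P (fun ω => (X ω, T ω)) := by
    have hfe : (fun ω => (X ω, T' ω))
        = fun ω => (Prod.map id g) ((fun ω => (X ω, T ω)) ω) := by
      funext ω
      simp [h ω, Prod.map]
    rw [hfe]
    exact ent_comp_inj _ (Prod.map id g)
      (Function.Injective.prodMap (fun _ _ hh => hh) hg)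
  rw [e1, e2]

/-- Converse bound for regime L₄: for `X` uniform, `Y` its erasure with probability
`p ∈ (0,1)`, `(W₁,W₂) - X - Y` Markov, `X̂₁ = f₁(W₁)`, `X̂₂ = f₂(W₁,W₂,Y)` with
`P(X≠X̂₁) ≤ D₁ ≤ 1/2` and `P(X≠X̂₂) ≤ D₂ ≤ p/2`, we have
`I(X;W₁) + I(X;W₂|Y,W₁) ≥ p(1 - h(D₂/p)) + (1-p)(1 - h(D₁))`. -/
theorem stmt8 {Ω γ δ : Type} [Fintype Ω] [Fintype γ] [Fintype δ]
    (P : Ω → ℝ) (hP : IsPMF P)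
    (X : Ω → Bool) (Y : Ω → Option Bool) (W₁ : Ω → γ) (W₂ : Ω → δ)
    (f₁ : γ → Bool) (f₂ : γ → δ → Option Bool → Bool)
    (p D₁ D₂ : ℝ) (hp : 0 < p) (hp1 : p < 1)
    (hX : ∀ b, pr P (fun ω => X ω = b) = 1/2)
    (hstruct : ∀ ω, Y ω = some (X ω) ∨ Y ω = none)
    (hind : ∀ b, pr P (fun ω => Y ω = none ∧ X ω = b) = p * pr P (fun ω => X ω = b))
    (hMarkov : ∀ (x : Bool) (y : Option Bool) (w1 : γ) (w2 : δ),
      pr P (fun ω => X ω = x ∧ Y ω = y ∧ W₁ ω = w1 ∧ W₂ ω = w2) * pr P (fun ω => X ω = x)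
        = pr P (fun ω => X ω = x ∧ Y ω = y)
          * pr P (fun ω => X ω = x ∧ W₁ ω = w1 ∧ W₂ ω = w2))
    (hD10 : 0 ≤ D₁) (hD1half : D₁ ≤ 1/2)
    (hD20 : 0 ≤ D₂) (hD2half : D₂ ≤ p/2)
    (hdist1 : pr P (fun ω => X ω ≠ f₁ (W₁ ω)) ≤ D₁)
    (hdist2 : pr P (fun ω => X ω ≠ f₂ (W₁ ω) (W₂ ω) (Y ω)) ≤ D₂) :
    mi P X W₁ + condMI P X W₂ (fun ω => (Y ω, W₁ ω))
      ≥ p * (1 - binEnt (D₂ / p)) + (1 - p) * (1 - binEnt D₁) := by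
  have hp0 : (0:ℝ) ≤ p := le_of_lt hp
  have hple : p ≤ 1 := le_of_lt hp1
  -- basic marginal
  have hXnone : ∀ x, pr P (fun ω => X ω = x ∧ Y ω = none) = p * (1/2) := by
    intro x
    rw [pr_congr (B := fun ω => Y ω = none ∧ X ω = x) (fun ω => and_comm), hind x, hX x]
  -- 4-way independence of the erasure event
  have h4 : ∀ x w1 w2, pr P (fun ω => X ω = x ∧ Y ω = none ∧ W₁ ω = w1 ∧ W₂ ω = w2)
      = p * pr P (fun ω => X ω = x ∧ W₁ ω = w1 ∧ W₂ ω = w2) := by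
    intro x w1 w2
    have hm := hMarkov x none w1 w2
    rw [hX x, hXnone x] at hm
    linarith
  -- for W₁ alone
  have hW1 : ∀ x w1, pr P (fun ω => X ω = x ∧ Y ω = none ∧ W₁ ω = w1)
      = p * pr P (fun ω => X ω = x ∧ W₁ ω = w1) := by
    intro x w1
    rw [pr_split (P := P) (fun ω => X ω = x ∧ Y ω = none ∧ W₁ ω = w1) W₂]
    rw [pr_split (P := P) (fun ω => X ω = x ∧ W₁ ω = w1) W₂, Finset.mul_sum]
    apply Finset.sum_congr rfl; intro w2 _
    rw [pr_congr (B := fun ω => X ω = x ∧ Y ω = none ∧ W₁ ω = w1 ∧ W₂ ω = w2)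
      (fun ω => by tauto), h4 x w1 w2]
    congr 1
    exact pr_congr (fun ω => by tauto)
  -- for the pair (W₁,W₂)
  set V : Ω → γ × δ := fun ω => (W₁ ω, W₂ ω) with hV
  have hWV : ∀ x v, pr P (fun ω => X ω = x ∧ Y ω = none ∧ V ω = v)
      = p * pr P (fun ω => X ω = x ∧ V ω = v) := by
    rintro x ⟨w1, w2⟩
    rw [pr_congr (B := fun ω => X ω = x ∧ Y ω = none ∧ W₁ ω = w1 ∧ W₂ ω = w2)
      (fun ω => by simp [hV, Prod.ext_iff, and_assoc]), h4 x w1 w2]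
    congr 1
    exact pr_congr (fun ω => by simp [hV, Prod.ext_iff, and_assoc])
  -- erasure identities
  have key1 : condEnt P X (fun ω => (Y ω, W₁ ω)) = p * condEnt P X W₁ :=
    erasure_condEnt hP X Y hstruct p hp0 hple W₁ hW1
  have key2 : condEnt P X (fun ω => (Y ω, V ω)) = p * condEnt P X V :=
    erasure_condEnt hP X Y hstruct p hp0 hple V hWV
  -- relabeling
  have keyR : condEnt P X (fun ω => (W₂ ω, (Y ω, W₁ ω))) = condEnt P X (fun ω => (Y ω, V ω)) := by
    symm
    apply condEnt_congr_inj (P := P) X (fun ω => (W₂ ω, (Y ω, W₁ ω)))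
      (fun ω => (Y ω, V ω)) (fun t => (t.2.1, (t.2.2, t.1)))
    · rintro ⟨a1, a2, a3⟩ ⟨b1, b2, b3⟩ hab
      simp only [Prod.ext_iff] at hab ⊢
      tauto
    · intro ω
      rfl
  -- Fano bounds
  have b1 : condEnt P X W₁ ≤ binEnt D₁ := fano hP X W₁ f₁ D₁ hdist1 hD1half
  -- second estimator
  set g2 : γ × δ → Bool := fun v => f₂ v.1 v.2 none with hg2
  have heq : pr P (fun ω => Y ω = none ∧ X ω ≠ g2 (V ω))
      = p * pr P (fun ω => X ω ≠ g2 (V ω)) := by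
    rw [show (fun ω => Y ω = none ∧ X ω ≠ g2 (V ω))
        = (fun ω => (fun a : (Bool × (γ × δ)) × Option Bool => a.2 = none ∧ a.1.1 ≠ g2 a.1.2)
            (((X ω, V ω), Y ω))) from rfl]
    rw [pr_comp (P := P) (fun ω => ((X ω, V ω), Y ω))
      (fun a => a.2 = none ∧ a.1.1 ≠ g2 a.1.2)]
    rw [show (fun ω => X ω ≠ g2 (V ω))
        = (fun ω => (fun a : Bool × (γ × δ) => a.1 ≠ g2 a.2) ((X ω, V ω))) from rfl]
    rw [pr_comp (P := P) (fun ω => (X ω, V ω)) (fun a => a.1 ≠ g2 a.2)]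
    rw [Fintype.sum_prod_type, Finset.mul_sum]
    apply Finset.sum_congr rfl
    rintro ⟨x, v⟩ _
    rw [Fintype.sum_option]
    simp only [reduceCtorEq, false_and, if_false,
      Finset.sum_const_zero, add_zero, eq_self_iff_true, true_and]
    by_cases hc : x ≠ g2 v
    · rw [if_pos hc, if_pos hc]
      rw [pr_congr (B := fun ω => X ω = x ∧ Y ω = none ∧ V ω = v)
        (fun ω => by simp [Prod.ext_iff]; tauto), hWV x v]
      congr 1
      exact pr_congr (fun ω => by simp [Prod.ext_iff])
    · rw [if_neg hc, if_neg hc]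
      ring
  have hmono : pr P (fun ω => Y ω = none ∧ X ω ≠ g2 (V ω))
      ≤ pr P (fun ω => X ω ≠ f₂ (W₁ ω) (W₂ ω) (Y ω)) := by
    apply pr_mono hP
    rintro ω ⟨hy, hne⟩
    rw [hy]
    exact hne
  have herr2 : pr P (fun ω => X ω ≠ g2 (V ω)) ≤ D₂ / p := by
    rw [le_div_iff₀ hp]
    calc pr P (fun ω => X ω ≠ g2 (V ω)) * p
        = p * pr P (fun ω => X ω ≠ g2 (V ω)) := by ring
      _ = pr P (fun ω => Y ω = none ∧ X ω ≠ g2 (V ω)) := heq.symm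
      _ ≤ pr P (fun ω => X ω ≠ f₂ (W₁ ω) (W₂ ω) (Y ω)) := hmono
      _ ≤ D₂ := hdist2
  have hD2p : D₂ / p ≤ 1/2 := by
    rw [div_le_iff₀ hp]
    linarith
  have b2 : condEnt P X V ≤ binEnt (D₂ / p) := fano hP X V g2 (D₂ / p) herr2 hD2p
  -- assemble
  unfold mi condMI
  rw [ent_bool_uniform X hX, key1]
  have keyR' : condEnt P X (fun ω => (W₂ ω, ((fun ω => (Y ω, W₁ ω)) ω)))
      = p * condEnt P X V := by
    rw [show (fun ω => (W₂ ω, ((fun ω => (Y ω, W₁ ω)) ω)))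
        = (fun ω => (W₂ ω, (Y ω, W₁ ω))) from rfl, keyR, key2]
  rw [keyR']
  have hb1 : (1 - p) * condEnt P X W₁ ≤ (1 - p) * binEnt D₁ :=
    mul_le_mul_of_nonneg_left b1 (by linarith)
  have hb2 : p * condEnt P X V ≤ p * binEnt (D₂ / p) :=
    mul_le_mul_of_nonneg_left b2 hp0
  linarith
end Main
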